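/- Let s be a finite set of cardinality N ≥ 2, let 1 ≤ P ≤ N, let x : ι → ℝ, and set x̄ = (1/N)∑_{j ∈ s} x_j. If a subset C is drawn uniformly at random from the P-element subsets of s, then the variance of the scaled batch sum (N/P) · ∑_{j ∈ C} x_j equals (N(N−P)/(P(N−1))) · ∑_{j ∈ s} (x_j − x̄)². -/

import Mathlib

section aux
variable {ι : Type*} [DecidableEq ι]

lemma count_subset (s : Finset ι) (P : ℕ) (t : Finset ι)
    (ht : t ⊆ s) (htP : t.card ≤ P) :
    ((s.powersetCard P).filter (fun C => t ⊆ C)).card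
      = (s.card - t.card).choose (P - t.card) := by
  rw [← Finset.card_sdiff_of_subset ht, ← Finset.card_powersetCard]
  apply Finset.card_nbij' (fun C => C \ t) (fun D => D ∪ t)
  · intro C hC
    simp only [Finset.mem_coe, Finset.mem_filter, Finset.mem_powersetCard] at hC ⊢
    obtain ⟨⟨hCs, hCcard⟩, htC⟩ := hC
    refine ⟨fun a ha => ?_, ?_⟩
    · simp only [Finset.mem_sdiff] at ha ⊢
      exact ⟨hCs ha.1, ha.2⟩
    · rw [Finset.card_sdiff_of_subset htC, hCcard]
  · intro D hD
    simp only [Finset.mem_coe, Finset.mem_powersetCard, Finset.mem_filter] at hD ⊢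
    obtain ⟨hDs, hDcard⟩ := hD
    have hdisj : Disjoint D t := by
      refine Finset.disjoint_left.mpr fun a ha hat => ?_
      exact ((Finset.mem_sdiff.mp (hDs ha)).2) hat
    refine ⟨⟨Finset.union_subset (hDs.trans (Finset.sdiff_subset)) ht, ?_⟩,
      Finset.subset_union_right⟩
    rw [Finset.card_union_of_disjoint hdisj, hDcard]
    omega
  · intro C hC
    simp only [Finset.mem_coe, Finset.mem_filter] at hC
    exact Finset.sdiff_union_of_subset hC.2
  · intro D hD
    simp only [Finset.mem_coe, Finset.mem_powersetCard] at hD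
    apply Finset.union_sdiff_cancel_right
    refine Finset.disjoint_left.mpr fun a ha hat => ?_
    exact ((Finset.mem_sdiff.mp (hD.1 ha)).2) hat

lemma count_one (s : Finset ι) (P : ℕ) (hP : 1 ≤ P) {j : ι} (hj : j ∈ s) :
    ((s.powersetCard P).filter (fun C => j ∈ C)).card
      = (s.card - 1).choose (P - 1) := by
  have := count_subset s P {j} (Finset.singleton_subset_iff.mpr hj)
    (by simpa using hP)
  simpa using this

lemma count_two (s : Finset ι) (P : ℕ) {i j : ι} (hi : i ∈ s) (hj : j ∈ s)
    (hij : i ≠ j) :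
    ((s.powersetCard P).filter (fun C => i ∈ C ∧ j ∈ C)).card
      = if 2 ≤ P then (s.card - 2).choose (P - 2) else 0 := by
  by_cases h2 : 2 ≤ P
  · rw [if_pos h2]
    have hsub : ({i, j} : Finset ι) ⊆ s := by
      intro a ha; simp only [Finset.mem_insert, Finset.mem_singleton] at ha
      rcases ha with rfl | rfl <;> assumption
    have hcard : ({i, j} : Finset ι).card = 2 := Finset.card_pair hij
    have := count_subset s P {i, j} hsub (by omega)
    rw [hcard] at this
    rw [← this]
    congr 1
    ext C
    simp only [Finset.mem_filter, Finset.insert_subset_iff, Finset.singleton_subset_iff]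
  · rw [if_neg h2]
    rw [Finset.card_eq_zero, Finset.filter_eq_empty_iff]
    intro C hC ⟨hiC, hjC⟩
    have hCcard : C.card = P := (Finset.mem_powersetCard.mp hC).2
    have hsub : ({i, j} : Finset ι) ⊆ C := by
      intro a ha; simp only [Finset.mem_insert, Finset.mem_singleton] at ha
      rcases ha with rfl | rfl <;> assumption
    have := Finset.card_le_card hsub
    rw [Finset.card_pair hij, hCcard] at this
    omega

lemma sum_over_powerset (s : Finset ι) (P : ℕ) (x : ι → ℝ) :
    ∑ C ∈ s.powersetCard P, ∑ j ∈ C, x j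
      = ∑ j ∈ s, ((((s.powersetCard P).filter (fun C => j ∈ C)).card : ℝ)) * x j := by
  have key : ∀ C ∈ s.powersetCard P, ∑ j ∈ C, x j = ∑ j ∈ s, if j ∈ C then x j else 0 := by
    intro C hC
    rw [Finset.sum_ite_mem, Finset.inter_eq_right.mpr (Finset.mem_powersetCard.mp hC).1]
  rw [Finset.sum_congr rfl key, Finset.sum_comm]
  refine Finset.sum_congr rfl fun j hj => ?_
  rw [← Finset.sum_filter, Finset.sum_const, nsmul_eq_mul]

lemma sum_sq_over_powerset (s : Finset ι) (P : ℕ) (x : ι → ℝ) :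
    ∑ C ∈ s.powersetCard P, (∑ j ∈ C, x j) ^ 2
      = ∑ i ∈ s, ∑ j ∈ s,
          ((((s.powersetCard P).filter (fun C => i ∈ C ∧ j ∈ C)).card : ℝ)) * (x i * x j) := by
  have key : ∀ C ∈ s.powersetCard P, (∑ j ∈ C, x j) ^ 2
      = ∑ i ∈ s, ∑ j ∈ s, if i ∈ C ∧ j ∈ C then x i * x j else 0 := by
    intro C hC
    have h : ∑ j ∈ C, x j = ∑ j ∈ s, if j ∈ C then x j else 0 := by
      rw [Finset.sum_ite_mem, Finset.inter_eq_right.mpr (Finset.mem_powersetCard.mp hC).1]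
    rw [sq, h, Finset.sum_mul_sum]
    exact Finset.sum_congr rfl fun i _ => Finset.sum_congr rfl fun j _ =>
      ite_zero_mul_ite_zero _ _ _ _
  rw [Finset.sum_congr rfl key, Finset.sum_comm]
  refine Finset.sum_congr rfl fun i hi => ?_
  rw [Finset.sum_comm]
  refine Finset.sum_congr rfl fun j hj => ?_
  rw [← Finset.sum_filter, Finset.sum_const, nsmul_eq_mul]

lemma double_sum_diag (s : Finset ι) (x : ι → ℝ) (A b : ℝ) :
    ∑ i ∈ s, ∑ j ∈ s, (if i = j then A else b) * (x i * x j)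
      = b * (∑ j ∈ s, x j) ^ 2 + (A - b) * ∑ j ∈ s, x j ^ 2 := by
  have step : ∀ i ∈ s, ∑ j ∈ s, (if i = j then A else b) * (x i * x j)
      = b * (x i * ∑ j ∈ s, x j) + (A - b) * x i ^ 2 := by
    intro i hi
    have : ∀ j ∈ s, (if i = j then A else b) * (x i * x j)
        = b * (x i * x j) + (if i = j then (A - b) * (x i * x j) else 0) := by
      intro j _; split_ifs <;> ring
    rw [Finset.sum_congr rfl this, Finset.sum_add_distrib,
      Finset.sum_ite_eq s i (fun j => (A - b) * (x i * x j)), if_pos hi,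
      ← Finset.mul_sum, ← Finset.mul_sum]
    ring
  rw [Finset.sum_congr rfl step, Finset.sum_add_distrib, ← Finset.mul_sum, ← Finset.mul_sum,
    ← Finset.sum_mul, sq]

end aux

/-- Exact variance of the random batch estimator: with `C` drawn uniformly at random
from the `P`-element subsets of `s` (so expectation is the average over
`s.powersetCard P`), the variance `E[Y²] - (E[Y])²` of `Y = (N/P) ∑ j ∈ C, x j`
equals `(N(N-P)/(P(N-1))) ∑ j ∈ s, (x j - x̄)²` where `x̄ = (1/N) ∑ j ∈ s, x j`. -/
theorem stmt_3 {ι : Type*} [DecidableEq ι] (s : Finset ι) (N P : ℕ)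
    (hN : s.card = N) (hN2 : 2 ≤ N) (hP1 : 1 ≤ P) (hPN : P ≤ N) (x : ι → ℝ) :
    ((s.powersetCard P).card : ℝ)⁻¹
        * ∑ C ∈ s.powersetCard P, (((N : ℝ) / (P : ℝ)) * ∑ j ∈ C, x j) ^ 2
      - (((s.powersetCard P).card : ℝ)⁻¹
          * ∑ C ∈ s.powersetCard P, ((N : ℝ) / (P : ℝ)) * ∑ j ∈ C, x j) ^ 2
      = ((N : ℝ) * ((N : ℝ) - (P : ℝ)) / ((P : ℝ) * ((N : ℝ) - 1)))
          * ∑ j ∈ s, (x j - (1 / (N : ℝ)) * ∑ k ∈ s, x k) ^ 2 := by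
  set S1 := ∑ j ∈ s, x j with hS1
  set S2 := ∑ j ∈ s, x j ^ 2 with hS2
  set A : ℕ := (N - 1).choose (P - 1) with hA
  set b : ℕ := if 2 ≤ P then (N - 2).choose (P - 2) else 0 with hb
  set M : ℕ := N.choose P with hM
  -- nat identities
  have hMpos : 0 < M := Nat.choose_pos hPN
  have idA : A * N = M * P := by
    have := Nat.add_one_mul_choose_eq (N - 1) (P - 1)
    have h1 : N - 1 + 1 = N := by omega
    have h2 : P - 1 + 1 = P := by omega
    rw [h1, h2] at this
    rw [hA, hM, Nat.mul_comm]
    exact this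
  have idB : b * (N * (N - 1)) = M * (P * (P - 1)) := by
    by_cases h2 : 2 ≤ P
    · have key := Nat.add_one_mul_choose_eq (N - 2) (P - 2)
      have e1 : N - 2 + 1 = N - 1 := by omega
      have e2 : P - 2 + 1 = P - 1 := by omega
      rw [e1, e2] at key
      have e3 : (N - 2).choose (P - 2) = b := by rw [hb, if_pos h2]
      -- key : (N-1) * (N-2).choose (P-2) = (N-1).choose (P-1) * (P-1)
      -- i.e. (N-1) * b = A * (P-1)
      have key2 : (N - 1) * b = A * (P - 1) := by rw [← e3]; exact key
      calc b * (N * (N - 1)) = N * ((N - 1) * b) := by ring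
        _ = N * (A * (P - 1)) := by rw [key2]
        _ = (A * N) * (P - 1) := by ring
        _ = (M * P) * (P - 1) := by rw [idA]
        _ = M * (P * (P - 1)) := by ring
    · have hb0 : b = 0 := by rw [hb, if_neg h2]
      have hP1' : P = 1 := by omega
      rw [hb0, hP1']
      simp
  -- sum computations
  have h1 : ∑ C ∈ s.powersetCard P, ∑ j ∈ C, x j = (A : ℝ) * S1 := by
    rw [sum_over_powerset, hS1, Finset.mul_sum]
    refine Finset.sum_congr rfl fun j hj => ?_
    rw [count_one s P hP1 hj, hN]
  have h2 : ∑ C ∈ s.powersetCard P, (∑ j ∈ C, x j) ^ 2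
      = (b : ℝ) * S1 ^ 2 + ((A : ℝ) - (b : ℝ)) * S2 := by
    rw [sum_sq_over_powerset]
    rw [← double_sum_diag s x (A : ℝ) (b : ℝ)]
    refine Finset.sum_congr rfl fun i hi => Finset.sum_congr rfl fun j hj => ?_
    congr 1
    by_cases hij : i = j
    · subst hij
      rw [if_pos rfl]
      have heq : Finset.filter (fun C => i ∈ C ∧ i ∈ C) (s.powersetCard P)
          = Finset.filter (fun C => i ∈ C) (s.powersetCard P) :=
        Finset.filter_congr (fun C _ => by simp)
      rw [heq, count_one s P hP1 hi, hN]
    · rw [if_neg hij, count_two s P hi hj hij, hN]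
  have hcardT : ((s.powersetCard P).card : ℝ) = (M : ℝ) := by
    rw [Finset.card_powersetCard, hN]
  -- casts and nonvanishing
  have hN0 : (N : ℝ) ≠ 0 := by
    have : (0:ℝ) < N := by exact_mod_cast (by omega : 0 < N)
    linarith
  have hP0 : (P : ℝ) ≠ 0 := by
    have : (0:ℝ) < P := by exact_mod_cast hP1
    linarith
  have hM0 : (M : ℝ) ≠ 0 := by
    have : (0:ℝ) < M := by exact_mod_cast hMpos
    linarith
  have hN1 : (N : ℝ) - 1 ≠ 0 := by
    have : (2:ℝ) ≤ N := by exact_mod_cast hN2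
    intro h; linarith
  have idA' : (A : ℝ) * N = (M : ℝ) * P := by exact_mod_cast idA
  have idB' : (b : ℝ) * ((N:ℝ) * ((N:ℝ) - 1)) = (M : ℝ) * ((P:ℝ) * ((P:ℝ) - 1)) := by
    have h := idB
    zify [show 1 ≤ N by omega, hP1] at h
    exact_mod_cast h
  -- RHS simplification
  have hRHS : ∑ j ∈ s, (x j - (1/(N:ℝ)) * S1) ^ 2 = S2 - S1 ^ 2 / N := by
    have expand : ∀ j ∈ s, (x j - (1/(N:ℝ))*S1) ^ 2
        = x j ^ 2 - (2/(N:ℝ))*S1*x j + (1/(N:ℝ)*S1) ^ 2 := fun j _ => by ring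
    rw [Finset.sum_congr rfl expand, Finset.sum_add_distrib, Finset.sum_sub_distrib,
      ← Finset.mul_sum, Finset.sum_const, hN, nsmul_eq_mul, ← hS1, ← hS2]
    field_simp
    ring
  have hL1 : ∑ C ∈ s.powersetCard P, ((N:ℝ)/(P:ℝ)) * ∑ j ∈ C, x j
      = ((N:ℝ)/(P:ℝ)) * ((A:ℝ) * S1) := by rw [← Finset.mul_sum, h1]
  have hL2 : ∑ C ∈ s.powersetCard P, (((N:ℝ)/(P:ℝ)) * ∑ j ∈ C, x j) ^ 2
      = ((N:ℝ)/(P:ℝ)) ^ 2 * ((b:ℝ) * S1 ^ 2 + ((A:ℝ) - (b:ℝ)) * S2) := by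
    simp_rw [mul_pow]
    rw [← Finset.mul_sum, h2]
  rw [hL1, hL2, hcardT, hRHS]
  have hA' : (A : ℝ) = (M:ℝ) * P / N := by
    rw [eq_div_iff hN0]; exact idA'
  have hb' : (b : ℝ) = (M:ℝ) * ((P:ℝ) * ((P:ℝ) - 1)) / ((N:ℝ) * ((N:ℝ) - 1)) := by
    rw [eq_div_iff (mul_ne_zero hN0 hN1)]; exact idB'
  rw [hA', hb']
  field_simp
  ring
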